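/- Let n, l ≥ 2 and let k_1,…,k_l be positive integers with k_1 + … + k_l = n. Let (V_1,…,V_l) and (V'_1,…,V'_l) be l-tuples of linear subspaces of ℂⁿ such that for every i, dim V_i = dim V'_i = k_i; the span of V_1,…,V_l and the span of V'_1,…,V'_l both have dimension n − 1; and for every j, the family (V_i)_{i≠j} is independent (their sum is a direct sum), and likewise the family (V'_i)_{i≠j} is independent. Then there exists an invertible n×n complex matrix g with g(V_i) = V'_i for every i. -/
import Mathlib


set_option synthInstance.maxHeartbeats 1000000
set_option maxHeartbeats 1000000

open Module Submodule

lemma aux_finrank_biSup {m : ℕ} {ι : Type*} [DecidableEq ι]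
    (p : ι → Submodule ℂ (Fin m → ℂ)) (s : Finset ι)
    (h : ∀ i ∈ s, p i ⊓ (⨆ j ∈ s.erase i, p j) = ⊥) :
    Module.finrank ℂ ↥(⨆ i ∈ s, p i) = ∑ i ∈ s, Module.finrank ℂ ↥(p i) := by
  classical
  induction s using Finset.induction with
  | empty => simp
  | @insert a s ha ih =>
    have hsup : (⨆ i ∈ insert a s, p i) = p a ⊔ ⨆ i ∈ s, p i :=
      Finset.iSup_insert a s p
    have hinf : p a ⊓ (⨆ i ∈ s, p i) = ⊥ := by
      have := h a (Finset.mem_insert_self a s)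
      rwa [Finset.erase_insert ha] at this
    have hrest : ∀ i ∈ s, p i ⊓ (⨆ j ∈ s.erase i, p j) = ⊥ := by
      intro i hi
      have hle : (⨆ j ∈ s.erase i, p j) ≤ ⨆ j ∈ (insert a s).erase i, p j := by
        refine iSup₂_le fun j hj => ?_
        exact le_iSup₂ (f := fun j _ => p j) j (Finset.mem_erase.2
          ⟨(Finset.mem_erase.1 hj).1, Finset.mem_insert_of_mem (Finset.mem_erase.1 hj).2⟩)
      have := h i (Finset.mem_insert_of_mem hi)
      exact le_bot_iff.1 (le_trans (inf_le_inf_left _ hle) this.le)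
    have key := Submodule.finrank_sup_add_finrank_inf_eq (p a) (⨆ i ∈ s, p i)
    rw [hinf] at key
    simp only [finrank_bot, add_zero] at key
    rw [hsup, key, ih hrest, Finset.sum_insert ha]

lemma exists_adapted (n l : ℕ) (hn : 2 ≤ n) (hl : 2 ≤ l) (k : Fin l → ℕ)
    (hk : ∀ i, 1 ≤ k i) (hsum : ∑ i, k i = n) (i0 : Fin l)
    (V : Fin l → Submodule ℂ (Fin n → ℂ))
    (hdim : ∀ i, Module.finrank ℂ ↥(V i) = k i)
    (hspan : Module.finrank ℂ ↥(⨆ i, V i) = n - 1)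
    (hind : ∀ j i, i ≠ j →
      V i ⊓ (⨆ i' : Fin l, ⨆ (_ : i' ≠ i ∧ i' ≠ j), V i') = ⊥) :
    ∃ b : Basis ((Σ i : Fin l, Fin (k i - 1)) ⊕ ({i : Fin l // i ≠ i0} ⊕ Unit)) ℂ (Fin n → ℂ),
      ∀ i : Fin l, V i = span ℂ (insert
        (if h : i = i0 then ∑ p : {i : Fin l // i ≠ i0}, b (Sum.inr (Sum.inl p))
         else b (Sum.inr (Sum.inl ⟨i, h⟩)))
        (Set.range fun j : Fin (k i - 1) => b (Sum.inl ⟨i, j⟩))) := by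
  classical
  set S : Submodule ℂ (Fin n → ℂ) := ⨆ i, V i with hS
  set B : Submodule ℂ (Fin n → ℂ) := ⨆ i ∈ Finset.univ.erase i0, V i with hB
  -- k i0 ≤ n
  have hki0n : k i0 ≤ n := hsum ▸ Finset.single_le_sum (fun i _ => Nat.zero_le _) (Finset.mem_univ i0)
  -- sum over erase
  have hsum' : ∑ i ∈ Finset.univ.erase i0, k i = n - k i0 := by
    have := Finset.sum_erase_add Finset.univ k (Finset.mem_univ i0)
    omega
  -- finrank B
  have hrkB : Module.finrank ℂ ↥B = n - k i0 := by
    rw [hB, aux_finrank_biSup V _ ?_]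
    · rw [← hsum']; exact Finset.sum_congr rfl fun i _ => hdim i
    · intro i hi
      have hi0 : i ≠ i0 := (Finset.mem_erase.1 hi).1
      have hle : (⨆ j ∈ (Finset.univ.erase i0).erase i, V j) ≤
          ⨆ i' : Fin l, ⨆ (_ : i' ≠ i ∧ i' ≠ i0), V i' := by
        refine iSup₂_le fun j hj => ?_
        have h1 := (Finset.mem_erase.1 hj).1
        have h2 := (Finset.mem_erase.1 (Finset.mem_erase.1 hj).2).1
        exact le_iSup₂ (f := fun i' (_ : i' ≠ i ∧ i' ≠ i0) => V i') j ⟨h1, h2⟩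
      exact le_bot_iff.1 (le_trans (inf_le_inf_left _ hle) (hind i0 i hi0).le)
  -- V i0 ⊔ B = S
  have hVB : V i0 ⊔ B = S := by
    apply le_antisymm
    · refine sup_le (le_iSup V i0) ?_
      exact iSup₂_le fun j _ => le_iSup V j
    · refine iSup_le fun i => ?_
      by_cases h : i = i0
      · subst h; exact le_sup_left
      · exact le_sup_of_le_right
          (le_iSup₂ (f := fun j (_ : j ∈ Finset.univ.erase i0) => V j) i
            (Finset.mem_erase.2 ⟨h, Finset.mem_univ i⟩))
  -- finrank of intersection is 1
  have hrkI : Module.finrank ℂ ↥(V i0 ⊓ B) = 1 := by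
    have key := Submodule.finrank_sup_add_finrank_inf_eq (V i0) B
    rw [hVB, hspan, hdim i0, hrkB] at key
    omega
  -- pick v
  have hIne : V i0 ⊓ B ≠ ⊥ := by
    intro h
    rw [h] at hrkI
    simp [finrank_bot] at hrkI
  obtain ⟨v, hvmem, hv0⟩ := Submodule.ne_bot_iff _ |>.1 hIne
  have hvV : v ∈ V i0 := hvmem.1
  have hvB : v ∈ B := hvmem.2
  -- decompose v along the family
  obtain ⟨w, hwmem, hwsum⟩ :=
    (Submodule.mem_iSup_iff_exists_finsupp
      (fun i => ⨆ (_ : i ∈ Finset.univ.erase i0), V i) v).1 hvB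
  have hwV : ∀ i, i ≠ i0 → w i ∈ V i := by
    intro i hi
    have := hwmem i
    rwa [iSup_pos (Finset.mem_erase.2 ⟨hi, Finset.mem_univ i⟩)] at this
  have hwi0 : w i0 = 0 := by
    have := hwmem i0
    rw [iSup_neg (by simp)] at this
    simpa using this
  have hvsum : ∑ i, w i = v := by
    rw [← hwsum, Finsupp.sum_fintype _ _ (fun _ => rfl)]
  have hsubsum : ∑ p : {i : Fin l // i ≠ i0}, w ↑p = v := by
    rw [← hvsum, ← Finset.sum_subtype (Finset.univ.erase i0)
      (fun i => by simp [Finset.mem_erase]) w]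
    rw [← Finset.sum_erase_add Finset.univ w (Finset.mem_univ i0), hwi0, add_zero]
  -- each w i is nonzero
  have hwne : ∀ i, i ≠ i0 → w i ≠ 0 := by
    intro j hj hjz
    have hmem : v ∈ ⨆ i' : Fin l, ⨆ (_ : i' ≠ i0 ∧ i' ≠ j), V i' := by
      rw [← hvsum]
      refine Submodule.sum_mem _ fun i _ => ?_
      by_cases h1 : i = i0
      · rw [h1, hwi0]; exact Submodule.zero_mem _
      by_cases h2 : i = j
      · rw [h2, hjz]; exact Submodule.zero_mem _
      · exact Submodule.mem_iSup_of_mem i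
          (by rw [iSup_pos ⟨h1, h2⟩]; exact hwV i h1)
    have : v ∈ V i0 ⊓ ⨆ i' : Fin l, ⨆ (_ : i' ≠ i0 ∧ i' ≠ j), V i' := ⟨hvV, hmem⟩
    rw [hind j i0 (Ne.symm hj)] at this
    exact hv0 this
  -- the distinguished vectors
  set c : Fin l → (Fin n → ℂ) := fun i => if i = i0 then v else w i with hc
  have hcV : ∀ i, c i ∈ V i := by
    intro i
    by_cases h : i = i0
    · subst h; simpa [hc] using hvV
    · simpa [hc, h] using hwV i h
  have hcne : ∀ i, c i ≠ 0 := by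
    intro i
    by_cases h : i = i0
    · subst h; simpa [hc] using hv0
    · simpa [hc, h] using hwne i h
  -- complements inside each V i
  have key : ∀ i : Fin l, ∃ u : Fin (k i - 1) → (Fin n → ℂ),
      V i = span ℂ {c i} ⊔ span ℂ (Set.range u) := by
    intro i
    set cv : ↥(V i) := ⟨c i, hcV i⟩ with hcv
    have hcvne : cv ≠ 0 := by
      intro h
      exact hcne i (by simpa [hcv, Submodule.mk_eq_zero] using h)
    obtain ⟨U, hU⟩ := Submodule.exists_isCompl (span ℂ {cv})
    have hrkL : finrank ℂ ↥(span ℂ {cv}) = 1 := finrank_span_singleton hcvne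
    have hrkU : finrank ℂ ↥U = k i - 1 := by
      have h2 := Submodule.finrank_add_eq_of_isCompl hU
      rw [hrkL, hdim i] at h2
      omega
    haveI : Module.Free ℂ ↥U := Module.Free.of_divisionRing ℂ ↥U
    set bu := finBasisOfFinrankEq ℂ ↥U hrkU with hbu
    refine ⟨fun j => ((bu j : ↥(V i)) : (Fin n → ℂ)), ?_⟩
    have h1 : V i = Submodule.map (V i).subtype (span ℂ {cv} ⊔ U) := by
      rw [hU.codisjoint.eq_top, Submodule.map_subtype_top]
    rw [Submodule.map_sup] at h1
    have h2 : Submodule.map (V i).subtype (span ℂ {cv}) = span ℂ {c i} := by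
      rw [Submodule.map_span, Set.image_singleton]
      rfl
    have h3 : Submodule.map (V i).subtype U
        = span ℂ (Set.range fun j => ((bu j : ↥(V i)) : (Fin n → ℂ))) := by
      have hcomp : (fun j => ((bu j : ↥(V i)) : (Fin n → ℂ)))
          = (V i).subtype ∘ (U.subtype ∘ bu) := rfl
      rw [hcomp, Set.range_comp, Set.range_comp, ← Submodule.map_span,
        ← Submodule.map_span, bu.span_eq, Submodule.map_subtype_top]
    rw [h2, h3] at h1
    exact h1
  choose u hu using key
  -- vector outside the span
  have hrkM : finrank ℂ (Fin n → ℂ) = n := by simp [Module.finrank_pi]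
  have hSne : S ≠ ⊤ := by
    intro h
    rw [h, finrank_top, hrkM] at hspan
    omega
  have hzex : ∃ z : (Fin n → ℂ), z ∉ S := by
    by_contra h
    push_neg at h
    exact hSne (eq_top_iff.mpr fun x _ => h x)
  obtain ⟨z, hz⟩ := hzex
  have hz0 : z ≠ 0 := fun h => hz (h ▸ S.zero_mem)
  have hQtop : S ⊔ span ℂ {z} = ⊤ := by
    apply Submodule.eq_top_of_finrank_eq
    have hdisj : S ⊓ span ℂ {z} = ⊥ :=
      disjoint_iff.1 ((Submodule.disjoint_span_singleton' hz0).2 hz)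
    have key := Submodule.finrank_sup_add_finrank_inf_eq S (span ℂ {z})
    rw [hdisj, hspan, finrank_span_singleton hz0] at key
    simp only [finrank_bot, add_zero] at key
    rw [key, hrkM]
    omega
  -- the full family
  set T := (Σ i : Fin l, Fin (k i - 1)) ⊕ ({i : Fin l // i ≠ i0} ⊕ Unit) with hT
  set e : T → (Fin n → ℂ) := Sum.elim (fun s => u s.1 s.2)
    (Sum.elim (fun p => w ↑p) (fun _ => z)) with he
  have hcard : Fintype.card T = n := by
    have h1 : ∑ i, (k i - 1) + l = n := by
      have : ∀ i : Fin l, (k i - 1) + 1 = k i := fun i => Nat.sub_add_cancel (hk i)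
      calc ∑ i, (k i - 1) + l = ∑ i, (k i - 1) + ∑ _i : Fin l, 1 := by simp
        _ = ∑ i, ((k i - 1) + 1) := by rw [← Finset.sum_add_distrib]
        _ = ∑ i, k i := Finset.sum_congr rfl fun i _ => this i
        _ = n := hsum
    have h2 : Fintype.card {i : Fin l // i ≠ i0} = l - 1 := by
      simp [Fintype.card_subtype_compl]
    simp only [hT, Fintype.card_sum, Fintype.card_sigma, Fintype.card_fin,
      Fintype.card_unit, h2]
    omega
  have htople : ⊤ ≤ span ℂ (Set.range e) := by
    set P := span ℂ (Set.range e) with hP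
    have hcP : ∀ i, c i ∈ P := by
      intro i
      by_cases h : i = i0
      · have h2 : c i = v := by simp [hc, h]
        rw [h2, ← hsubsum]
        exact Submodule.sum_mem _ fun p _ =>
          subset_span ⟨Sum.inr (Sum.inl p), rfl⟩
      · have : c i = w i := by simp [hc, h]
        rw [this]
        exact subset_span ⟨Sum.inr (Sum.inl ⟨i, h⟩), rfl⟩
    have hallV : ∀ i, V i ≤ P := by
      intro i
      rw [hu i]
      refine sup_le ?_ ?_
      · exact (span_le.2 (Set.singleton_subset_iff.2 (hcP i)))
      · refine span_mono ?_
        rintro - ⟨j, rfl⟩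
        exact ⟨Sum.inl ⟨i, j⟩, rfl⟩
    have hSP : S ≤ P := iSup_le hallV
    have hzP : z ∈ P := subset_span ⟨Sum.inr (Sum.inr ()), rfl⟩
    rw [← hQtop]
    exact sup_le hSP (span_le.2 (Set.singleton_subset_iff.2 hzP))
  refine ⟨basisOfTopLeSpanOfCardEqFinrank e htople (by rw [hcard, hrkM]), ?_⟩
  intro i
  have hbe : ⇑(basisOfTopLeSpanOfCardEqFinrank e htople (by rw [hcard, hrkM])) = e :=
    coe_basisOfTopLeSpanOfCardEqFinrank e htople _
  rw [Submodule.span_insert, hbe]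
  have hXc : (if h : i = i0 then ∑ p : {i : Fin l // i ≠ i0}, e (Sum.inr (Sum.inl p))
      else e (Sum.inr (Sum.inl ⟨i, h⟩))) = c i := by
    by_cases h : i = i0
    · rw [dif_pos h]
      have h1 : ∀ p : {i : Fin l // i ≠ i0}, e (Sum.inr (Sum.inl p)) = w ↑p := fun p => rfl
      simp only [h1, hsubsum]
      simp [hc, h]
    · rw [dif_neg h]
      simp [he, hc, h]
  rw [hXc]
  have hre : (Set.range fun j : Fin (k i - 1) => e (Sum.inl ⟨i, j⟩))
      = Set.range (u i) := rfl
  rw [hre]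
  exact hu i

/-- let `k_1 + … + k_l = n` and let `(V_1, …, V_l)` and `(V'_1, …, V'_l)`
be tuples of subspaces of `ℂⁿ` with `dim V_i = dim V'_i = k_i`, whose spans both have
dimension `n − 1`, and such that for every `j`, the family `(V_i)_{i ≠ j}` is independent
(each member meets the sum of the others in `0`), and likewise for `(V'_i)_{i ≠ j}`.
Then some invertible matrix `g` carries each `V_i` onto `V'_i`. -/
theorem stmt16 (n l : ℕ) (hn : 2 ≤ n) (hl : 2 ≤ l) (k : Fin l → ℕ)
    (hk : ∀ i, 1 ≤ k i) (hsum : ∑ i, k i = n)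
    (V V' : Fin l → Submodule ℂ (Fin n → ℂ))
    (hdim : ∀ i, Module.finrank ℂ ↥(V i) = k i)
    (hdim' : ∀ i, Module.finrank ℂ ↥(V' i) = k i)
    (hspan : Module.finrank ℂ ↥(⨆ i, V i) = n - 1)
    (hspan' : Module.finrank ℂ ↥(⨆ i, V' i) = n - 1)
    (hind : ∀ j i, i ≠ j →
      V i ⊓ (⨆ i' : Fin l, ⨆ (_ : i' ≠ i ∧ i' ≠ j), V i') = ⊥)
    (hind' : ∀ j i, i ≠ j →
      V' i ⊓ (⨆ i' : Fin l, ⨆ (_ : i' ≠ i ∧ i' ≠ j), V' i') = ⊥) :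
    ∃ g : Matrix (Fin n) (Fin n) ℂ, IsUnit g ∧
      ∀ i, Submodule.map g.mulVecLin (V i) = V' i := by
  classical
  have hl0 : 0 < l := by omega
  set i0 : Fin l := ⟨0, hl0⟩ with hi0
  obtain ⟨b, hb⟩ := exists_adapted n l hn hl k hk hsum i0 V hdim hspan hind
  obtain ⟨b', hb'⟩ := exists_adapted n l hn hl k hk hsum i0 V' hdim' hspan' hind'
  set f : (Fin n → ℂ) ≃ₗ[ℂ] (Fin n → ℂ) := b.equiv b' (Equiv.refl _) with hf
  have hfb : ∀ t, f (b t) = b' t := fun t => by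
    simp [hf, Basis.equiv_apply]
  refine ⟨LinearMap.toMatrix' (f : (Fin n → ℂ) →ₗ[ℂ] (Fin n → ℂ)), ?_, ?_⟩
  · have h1 : ((f : (Fin n → ℂ) →ₗ[ℂ] (Fin n → ℂ)).comp
        (f.symm : (Fin n → ℂ) →ₗ[ℂ] (Fin n → ℂ))) = LinearMap.id := by
      ext x; simp
    have h2 : ((f.symm : (Fin n → ℂ) →ₗ[ℂ] (Fin n → ℂ)).comp
        (f : (Fin n → ℂ) →ₗ[ℂ] (Fin n → ℂ))) = LinearMap.id := by
      ext x; simp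
    refine ⟨⟨LinearMap.toMatrix' (f : (Fin n → ℂ) →ₗ[ℂ] (Fin n → ℂ)),
      LinearMap.toMatrix' (f.symm : (Fin n → ℂ) →ₗ[ℂ] (Fin n → ℂ)), ?_, ?_⟩, rfl⟩
    · rw [← LinearMap.toMatrix'_comp, h1, LinearMap.toMatrix'_id]
    · rw [← LinearMap.toMatrix'_comp, h2, LinearMap.toMatrix'_id]
  · intro i
    have hg : (LinearMap.toMatrix'
        (f : (Fin n → ℂ) →ₗ[ℂ] (Fin n → ℂ))).mulVecLin
        = (f : (Fin n → ℂ) →ₗ[ℂ] (Fin n → ℂ)) := by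
      rw [← Matrix.toLin'_apply', Matrix.toLin'_toMatrix']
    rw [hg, hb i, hb' i, Submodule.map_span]
    congr 1
    rw [Set.image_insert_eq]
    congr 1
    · by_cases h : i = i0
      · rw [dif_pos h, dif_pos h, map_sum]
        exact Finset.sum_congr rfl fun p _ => hfb _
      · rw [dif_neg h, dif_neg h]
        exact hfb _
    · rw [← Set.range_comp]
      exact congrArg Set.range (funext fun j => hfb _)
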